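/- The connection ρ on the instanton bundle, ρ(T_ν) = Σ_μ b_μ* L_{μ,ν}, is invariant under the action of the braided Lie algebra so_θ(5) spanned by the equivariant derivations L_{μ,ν}: for every L_{μ,ν} and every X ∈ Der(O(S^4_θ)) one has [L_{μ,ν}, ρ(X)] − ρ([L^π_{μ,ν}, X]) = 0 (i.e. δ_{L_{μ,ν}} ρ = 0). -/

import Mathlib

/-!
STATEMENT 8: the connection `ρ` on the instanton bundle,
`ρ(T_ν) = Σ_μ b_μ* L_{μ,ν}`, is invariant under the action of the braided Lie
algebra `so_θ(5)` spanned by the equivariant derivations `L_{μ,ν}`: for every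
`L_{μ,ν}` and every `X ∈ Der(O(S^4_θ))` one has
`[L_{μ,ν}, ρ(X)] − ρ([L^π_{μ,ν}, X]) = 0` (i.e. `δ_{L_{μ,ν}} ρ = 0`).

`O(S^7_θ)` is modelled as a graded `ℂ`-algebra `A` with coinvariant subalgebra
`B := Algebra.adjoin ℂ (b '' V) = O(S^4_θ)`; the equivariant braided
derivations `L_{μ,ν} = −λ^{2μ∧ν} L_{ν,μ}` satisfy the `so_θ(5)` relations,
preserve `B` and restrict to `L^π_{μ,ν}` (the data `Lr` below) with
`L^π_{μ,ν}(b_σ) = b_μ δ_{ν*σ} − λ^{2μ∧ν} b_ν δ_{μ*σ}`.  `Der(O(S^4_θ))` is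
generated over `O(S^4_θ)` by the braided derivations `T_ν` of `B` with
`T_ν(b_σ) = δ_{νσ*} − b_ν ∙ b_σ`; the connection is the (left and right)
`O(S^4_θ)`-linear map `ρ` with `ρ(T_ν) = Σ_μ b_μ* L_{μ,ν}`.  By the
`O(S^4_θ)`-linearity of `ρ` it suffices to state the invariance on the
generators `X = T_σ`; the brackets are braided commutators (with braiding
factor `λ^{2(μ+ν)∧σ}`).
-/

noncomputable section

open scoped BigOperators

namespace Statement8

/-- the five weights `{(0,0),(±1,0),(0,±1)}` -/
def V : Finset (ℤ × ℤ) := {(0,0), (1,0), (-1,0), (0,1), (0,-1)}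

/-- `μ∧ν := μ₁ν₂ − μ₂ν₁` -/
def wedge (p r : ℤ × ℤ) : ℤ := p.1 * r.2 - p.2 * r.1

/-- `λ^{2 μ∧ν}` with `λ = e^{−πiθ}` -/
def q (θ : ℝ) (p r : ℤ × ℤ) : ℂ :=
  Complex.exp (-((Real.pi : ℂ) * Complex.I) * (θ : ℂ) * ((2 * wedge p r : ℤ) : ℂ))

/-- the doubled weight `2μ` (the generators `z_r` of `O(S^7_θ)` have
half-integral weights, so the grading uses doubled weights) -/
def dbl (p : ℤ × ℤ) : ℤ × ℤ := (2 * p.1, 2 * p.2)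

/-- the braiding factor between homogeneous elements of (doubled) weights
`m`, `m'`; on the subalgebra `O(S^4_θ)`, `Q7 θ (dbl μ) (dbl ν) = λ^{2μ∧ν}`. -/
def Q7 (θ : ℝ) (m m' : ℤ × ℤ) : ℂ :=
  Complex.exp (-((Real.pi : ℂ) * Complex.I) * (θ : ℂ) * (((wedge m m' : ℤ) : ℂ) / 2))

lemma neg_mem_V {τ : ℤ × ℤ} (h : τ ∈ V) : -τ ∈ V := by
  fin_cases h <;> decide

lemma q_mul (θ : ℝ) {p r p' r' s t : ℤ × ℤ} (h : wedge p r + wedge p' r' = wedge s t) :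
    q θ p r * q θ p' r' = q θ s t := by
  unfold q
  rw [← Complex.exp_add]
  congr 1
  have hc : ((wedge p r : ℂ)) + (wedge p' r' : ℂ) = (wedge s t : ℂ) := by
    exact_mod_cast congrArg (fun n : ℤ => (n : ℂ)) h
  push_cast
  linear_combination (2 * (-((Real.pi : ℂ) * Complex.I)) * (θ : ℂ)) * hc

lemma q_one (θ : ℝ) {p r : ℤ × ℤ} (h : wedge p r = 0) : q θ p r = 1 := by
  unfold q; rw [h]; simp

lemma q_mul_one (θ : ℝ) {p r p' r' : ℤ × ℤ} (h : wedge p r + wedge p' r' = 0) :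
    q θ p r * q θ p' r' = 1 := by
  have hw : wedge p p = 0 := by simp [wedge]; ring
  rw [q_mul θ (t := p) (s := p) (by rw [hw]; exact h)]
  exact q_one θ hw

lemma q_eqw (θ : ℝ) {p r s t : ℤ × ℤ} (h : wedge p r = wedge s t) : q θ p r = q θ s t := by
  unfold q; rw [h]

lemma Q7_congr (θ : ℝ) {m1 m2 : ℤ × ℤ} (m : ℤ × ℤ) (h : m1 = m2) : Q7 θ m1 m = Q7 θ m2 m := by
  rw [h]

lemma Q7_add_right (θ : ℝ) (m a b' : ℤ × ℤ) : Q7 θ m (a + b') = Q7 θ m a * Q7 θ m b' := by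
  unfold Q7
  rw [← Complex.exp_add]
  congr 1
  have : wedge m (a + b') = wedge m a + wedge m b' := by simp [wedge]; ring
  rw [this]
  push_cast
  ring

lemma Q7_add_left (θ : ℝ) (a b' m : ℤ × ℤ) : Q7 θ (a + b') m = Q7 θ a m * Q7 θ b' m := by
  unfold Q7
  rw [← Complex.exp_add]
  congr 1
  have : wedge (a + b') m = wedge a m + wedge b' m := by simp [wedge]; ring
  rw [this]
  push_cast
  ring

lemma Q7_zero_right (θ : ℝ) (m : ℤ × ℤ) : Q7 θ m 0 = 1 := by
  unfold Q7
  have : wedge m 0 = 0 := by simp [wedge]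
  rw [this]
  simp

lemma Q7_dbl (θ : ℝ) (p r : ℤ × ℤ) : Q7 θ (dbl p) (dbl r) = q θ p r := by
  unfold Q7 q
  congr 1
  have : wedge (dbl p) (dbl r) = 4 * wedge p r := by simp [wedge, dbl]; ring
  rw [this]
  push_cast
  ring

lemma dbl_add (p r : ℤ × ℤ) : dbl (p + r) = dbl p + dbl r := by
  simp [dbl, Prod.ext_iff]; constructor <;> ring

lemma dbl_neg (p : ℤ × ℤ) : dbl (-p) = - dbl p := by
  simp [dbl, Prod.ext_iff]

lemma q_q_q_one (θ : ℝ) {p1 r1 p2 r2 p3 r3 : ℤ × ℤ}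
    (h : wedge p1 r1 + (wedge p2 r2 + wedge p3 r3) = 0) :
    q θ p1 r1 * (q θ p2 r2 * q θ p3 r3) = 1 := by
  rw [q_mul θ (p := p2) (r := r2) (p' := p3) (r' := r3) (s := ((1:ℤ),(0:ℤ)))
      (t := ((0:ℤ), wedge p2 r2 + wedge p3 r3)) (by simp [wedge]),
    q_mul θ (p := p1) (r := r1) (s := ((1:ℤ),(0:ℤ)))
      (t := ((0:ℤ), wedge p1 r1 + (wedge p2 r2 + wedge p3 r3))) (by simp [wedge])]
  apply q_one
  simp only [wedge] at h ⊢
  linarith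

lemma Q7_ddbl (θ : ℝ) (p r s : ℤ × ℤ) : Q7 θ (dbl p + dbl r) (dbl s) = q θ (p + r) s := by
  rw [← dbl_add, Q7_dbl]

lemma Q7_ddbl' (θ : ℝ) (p r s : ℤ × ℤ) : Q7 θ (dbl p) (dbl r + dbl s) = q θ p (r + s) := by
  rw [← dbl_add, Q7_dbl]

set_option maxHeartbeats 4000000 in
theorem instanton_connection_invariant
    (θ : ℝ)
    (A : Type*) [Ring A] [Algebra ℂ A]
    (𝒜 : ℤ × ℤ → Submodule ℂ A) [GradedAlgebra 𝒜]
    -- generators `b_μ` of the coinvariant subalgebra `O(S^4_θ)` (`b_μ* = b_{−μ}`)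
    (b : ℤ × ℤ → A)
    (hb : ∀ μ ∈ V, b μ ∈ 𝒜 (dbl μ))
    (hcomm : ∀ μ ∈ V, ∀ ν ∈ V, b μ * b ν = q θ μ ν • (b ν * b μ))
    (hsph : ∑ μ ∈ V, b (-μ) * b μ = 1)
    -- the `O(SU(2))`-equivariant braided derivations `L_{μ,ν}` of `O(S^7_θ)`
    (L : ℤ × ℤ → ℤ × ℤ → Module.End ℂ A)
    (hanti : ∀ μ ∈ V, ∀ ν ∈ V, L μ ν = -(q θ μ ν) • L ν μ)
    (hLval : ∀ μ ∈ V, ∀ ν ∈ V, ∀ σ ∈ V,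
      L μ ν (b σ) = (if σ = -ν then (1:ℂ) else 0) • b μ
        - q θ μ ν • ((if σ = -μ then (1:ℂ) else 0) • b ν))
    (hLeib : ∀ μ ∈ V, ∀ ν ∈ V, ∀ (m : ℤ × ℤ) (x y : A), x ∈ 𝒜 m →
      L μ ν (x * y) = L μ ν x * y + Q7 θ (dbl μ + dbl ν) m • (x * L μ ν y))
    -- the derivations `L_{μ,ν}` preserve the coinvariant subalgebra
    -- `B = O(S^4_θ)`
    (hLB : ∀ μ ∈ V, ∀ ν ∈ V, ∀ x ∈ Algebra.adjoin ℂ (b '' V),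
      L μ ν x ∈ Algebra.adjoin ℂ (b '' V))
    -- the generators `T_ν` of the braided derivations of `O(S^4_θ)`
    (Tsph : ℤ × ℤ → Module.End ℂ (Algebra.adjoin ℂ (b '' V)))
    (hTval : ∀ ν ∈ V, ∀ τ, ∀ hτ : τ ∈ V,
      ((Tsph ν ⟨b τ, Algebra.subset_adjoin (Set.mem_image_of_mem b hτ)⟩ :
          Algebra.adjoin ℂ (b '' V)) : A)
        = (if τ = -ν then 1 else 0) - b ν * b τ)
    (hTLeib : ∀ ν ∈ V, ∀ (m : ℤ × ℤ) (x y : Algebra.adjoin ℂ (b '' V)),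
      (x : A) ∈ 𝒜 m →
      Tsph ν (x * y) = Tsph ν x * y + Q7 θ (dbl ν) m • (x * Tsph ν y))
    -- the `so_θ(5)` relations for the `L_{μ,ν}`
    (hanti : ∀ μ ∈ V, ∀ ν ∈ V, L μ ν = -(q θ μ ν) • L ν μ)
    (hLrel : ∀ μ ∈ V, ∀ ν ∈ V, ∀ τ ∈ V, ∀ σ ∈ V,
      L μ ν ∘ₗ L τ σ - q θ (μ + ν) (τ + σ) • (L τ σ ∘ₗ L μ ν)
        = (if τ = -ν then (1:ℂ) else 0) • L μ σ
          - q θ μ ν • ((if τ = -μ then (1:ℂ) else 0) • L ν σ)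
          - q θ τ σ • ((if σ = -ν then (1:ℂ) else 0) • L μ τ
              - q θ μ ν • ((if σ = -μ then (1:ℂ) else 0) • L ν τ)))
    -- the restrictions `L^π_{μ,ν}` of the `L_{μ,ν}` to `O(S^4_θ)`
    (Lr : ℤ × ℤ → ℤ × ℤ → Module.End ℂ (Algebra.adjoin ℂ (b '' V)))
    (hLr : ∀ μ ∈ V, ∀ ν ∈ V, ∀ x : Algebra.adjoin ℂ (b '' V),
      ((Lr μ ν x : Algebra.adjoin ℂ (b '' V)) : A) = L μ ν (x : A))
    -- the connection `ρ`, an `O(S^4_θ)`-linear map from `Der(O(S^4_θ))` to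
    -- the equivariant derivations of `O(S^7_θ)`, with `ρ(T_ν) = Σ_μ b_μ* L_{μ,ν}`
    (ρ : Module.End ℂ (Algebra.adjoin ℂ (b '' V)) → Module.End ℂ A)
    (hρadd : ∀ X Y, ρ (X + Y) = ρ X + ρ Y)
    (hρsmul : ∀ (c : ℂ) X, ρ (c • X) = c • ρ X)
    (hρlin : ∀ (c : Algebra.adjoin ℂ (b '' V)) X,
      ρ ((LinearMap.mulLeft ℂ c) ∘ₗ X) = (LinearMap.mulLeft ℂ (c : A)) ∘ₗ ρ X)
    (hρT : ∀ ν ∈ V, ρ (Tsph ν) = ∑ μ ∈ V, (LinearMap.mulLeft ℂ (b (-μ))) ∘ₗ L μ ν) :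
    -- `[L_{μ,ν}, ρ(T_σ)] − ρ([L^π_{μ,ν}, T_σ]) = 0` for all generators `T_σ`
    ∀ μ ∈ V, ∀ ν ∈ V, ∀ σ ∈ V,
      (L μ ν ∘ₗ ρ (Tsph σ) - q θ (μ + ν) σ • (ρ (Tsph σ) ∘ₗ L μ ν))
        - ρ (Lr μ ν ∘ₗ Tsph σ - q θ (μ + ν) σ • (Tsph σ ∘ₗ Lr μ ν)) = 0 := by
  intro μ hμ ν hν σ hσ
  have key : Lr μ ν ∘ₗ Tsph σ - q θ (μ + ν) σ • (Tsph σ ∘ₗ Lr μ ν)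
      = (if σ = -ν then (1:ℂ) else 0) • Tsph μ
        - q θ μ ν • ((if σ = -μ then (1:ℂ) else 0) • Tsph ν) := by
    have hT1 : ∀ τ ∈ V, Tsph τ 1 = 0 := by
      intro τ hτ
      have h1m : ((1 : Algebra.adjoin ℂ (b '' V)) : A) ∈ 𝒜 0 := by
        rw [OneMemClass.coe_one]; exact SetLike.one_mem_graded 𝒜
      have h := hTLeib τ hτ 0 1 1 h1m
      rw [mul_one, mul_one, one_mul, Q7_zero_right, one_smul] at h
      exact left_eq_add.mp h
    have hL1 : L μ ν 1 = 0 := by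
      have h := hLeib μ hμ ν hν 0 1 1 (SetLike.one_mem_graded 𝒜)
      rw [mul_one, mul_one, one_mul, Q7_zero_right, one_smul] at h
      exact left_eq_add.mp h
    -- the statement we prove for every element of the subalgebra
    suffices H : ∀ z : Algebra.adjoin ℂ (b '' V),
        L μ ν (↑(Tsph σ z) : A) - q θ (μ + ν) σ • (↑(Tsph σ (Lr μ ν z)) : A)
          = (if σ = -ν then (1:ℂ) else 0) • (↑(Tsph μ z) : A)
            - q θ μ ν • ((if σ = -μ then (1:ℂ) else 0) • (↑(Tsph ν z) : A)) by
      apply LinearMap.ext; intro z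
      apply Subtype.ext
      have h := H z
      simp only [LinearMap.sub_apply, LinearMap.smul_apply, LinearMap.comp_apply,
        AddSubgroupClass.coe_sub, SetLike.val_smul, hLr μ hμ ν hν]
      exact h
    -- abbreviation for the property
    intro z
    have stage1 : ∀ a ∈ Submonoid.closure (b '' (V : Set (ℤ × ℤ))),
        ∃ (hB : a ∈ Algebra.adjoin ℂ (b '' V)) (m : ℤ × ℤ),
          a ∈ 𝒜 m ∧ (↑(Tsph σ ⟨a, hB⟩) : A) ∈ 𝒜 (m + dbl σ)
            ∧ L μ ν a ∈ 𝒜 (m + (dbl μ + dbl ν))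
            ∧ (L μ ν (↑(Tsph σ ⟨a, hB⟩) : A)
                - q θ (μ + ν) σ • (↑(Tsph σ (Lr μ ν ⟨a, hB⟩)) : A)
              = (if σ = -ν then (1:ℂ) else 0) • (↑(Tsph μ ⟨a, hB⟩) : A)
                - q θ μ ν • ((if σ = -μ then (1:ℂ) else 0) • (↑(Tsph ν ⟨a, hB⟩) : A))) := by
      intro a ha
      induction ha using Submonoid.closure_induction with
      | mem a ha =>
        obtain ⟨τ, hτV', rfl⟩ := ha
        have hτV : τ ∈ V := by simpa using hτV'
        have hBτ : b τ ∈ Algebra.adjoin ℂ (b '' V) :=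
          Algebra.subset_adjoin (Set.mem_image_of_mem b hτV)
        have memg : ∀ {i j : ℤ × ℤ} {x : A}, i = j → x ∈ 𝒜 i → x ∈ 𝒜 j := by
          rintro i j x rfl hx; exact hx
        refine ⟨hBτ, dbl τ, hb τ hτV, ?_, ?_, ?_⟩
        · rw [hTval σ hσ τ hτV]
          refine sub_mem ?_ (memg (add_comm _ _) (SetLike.mul_mem_graded (hb σ hσ) (hb τ hτV)))
          by_cases hc : τ = -σ
          · rw [if_pos hc]
            refine memg (i := (0 : ℤ × ℤ)) ?_ (SetLike.one_mem_graded 𝒜)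
            subst hc; rw [dbl_neg]; ring
          · rw [if_neg hc]; exact zero_mem _
        · rw [hLval μ hμ ν hν τ hτV]
          refine sub_mem ?_ (Submodule.smul_mem _ _ ?_)
          · by_cases hc : τ = -ν
            · rw [if_pos hc, one_smul]
              refine memg (i := dbl μ) ?_ (hb μ hμ)
              subst hc; rw [dbl_neg]; ring
            · rw [if_neg hc, zero_smul]; exact zero_mem _
          · by_cases hc : τ = -μ
            · rw [if_pos hc, one_smul]
              refine memg (i := dbl ν) ?_ (hb ν hν)
              subst hc; rw [dbl_neg]; ring
            · rw [if_neg hc, zero_smul]; exact zero_mem _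
        · -- the bracket identity on the generator `b τ`
          have hBμ : b μ ∈ Algebra.adjoin ℂ (b '' V) :=
            Algebra.subset_adjoin (Set.mem_image_of_mem b hμ)
          have hBν : b ν ∈ Algebra.adjoin ℂ (b '' V) :=
            Algebra.subset_adjoin (Set.mem_image_of_mem b hν)
          have ct : (↑(Tsph σ ⟨b τ, hBτ⟩) : A) = (if τ = -σ then 1 else 0) - b σ * b τ :=
            hTval σ hσ τ hτV
          have cLr : Lr μ ν ⟨b τ, hBτ⟩
              = (if τ = -ν then (1:ℂ) else 0) • (⟨b μ, hBμ⟩ : Algebra.adjoin ℂ (b '' V))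
                - q θ μ ν • ((if τ = -μ then (1:ℂ) else 0) • (⟨b ν, hBν⟩ : Algebra.adjoin ℂ (b '' V))) := by
            apply Subtype.ext
            rw [hLr μ hμ ν hν]
            simp only [AddSubgroupClass.coe_sub, SetLike.val_smul]
            exact hLval μ hμ ν hν τ hτV
          have cTLr : (↑(Tsph σ (Lr μ ν ⟨b τ, hBτ⟩)) : A)
              = (if τ = -ν then (1:ℂ) else 0) • ((if μ = -σ then (1:A) else 0) - b σ * b μ)
                - q θ μ ν • ((if τ = -μ then (1:ℂ) else 0) • ((if ν = -σ then (1:A) else 0) - b σ * b ν)) := by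
            rw [cLr]
            simp only [map_sub, map_smul, AddSubgroupClass.coe_sub, SetLike.val_smul,
              hTval σ hσ μ hμ, hTval σ hσ ν hν]
          have hLif : L μ ν (if τ = -σ then (1:A) else 0) = 0 := by
            split
            · exact hL1
            · exact map_zero _
          have hLbb : L μ ν (b σ * b τ) = L μ ν (b σ) * b τ + q θ (μ + ν) σ • (b σ * L μ ν (b τ)) := by
            rw [hLeib μ hμ ν hν (dbl σ) (b σ) (b τ) (hb σ hσ), Q7_ddbl]
          have hifA : ∀ (P : Prop) [Decidable P], (if P then (1:A) else 0) = (if P then (1:ℂ) else 0) • (1:A) := by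
            intro P _
            split <;> simp
          rw [ct, map_sub, hLif, hLbb, cTLr, hLval μ hμ ν hν σ hσ, hLval μ hμ ν hν τ hτV,
            hTval μ hμ τ hτV, hTval ν hν τ hτV]
          simp only [hifA]
          simp only [sub_mul, mul_sub, smul_mul_assoc, mul_smul_comm, smul_sub, smul_add,
            smul_smul, mul_one, one_mul, neg_mul, mul_neg, neg_sub, sub_neg_eq_add]
          by_cases hσν : σ = -ν <;> by_cases hσμ : σ = -μ
          · have hnm : ν = μ := neg_inj.mp (hσν.symm.trans hσμ)
            subst hnm
            subst hσν
            have hz1 : q θ ν ν = 1 := q_one θ (by simp [wedge]; ring)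
            have hz2 : q θ (ν + ν) (-ν) = 1 := q_one θ (by simp [wedge]; ring)
            simp only [neg_neg, if_pos rfl, if_true, eq_self_iff_true, one_smul, one_mul, mul_one,
              zero_smul, smul_zero, sub_zero, zero_sub]
            rw [hz1, hz2]
            match_scalars <;> ring1
          · subst hσν
            have hf1 : q θ (μ + ν) (-ν) * q θ μ ν = 1 := q_mul_one θ (by simp [wedge]; ring)
            have hne1 : ¬((-ν : ℤ × ℤ) = -μ) := hσμ
            have hne3 : ¬(μ = ν) := fun h => hσμ (by rw [h])
            simp only [neg_neg, if_pos rfl, if_neg hne1, if_neg hne3, if_true, if_false,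
              eq_self_iff_true, one_smul, one_mul, mul_one, zero_smul, smul_zero, sub_zero,
              zero_sub, zero_mul, mul_zero]
            match_scalars <;>
              first
                | ring1
                | linear_combination ((if τ = -μ then (1:ℂ) else 0)) * hf1
                | linear_combination (-(if τ = -μ then (1:ℂ) else 0)) * hf1
                | linear_combination ((if τ = -ν then (1:ℂ) else 0)) * hf1
                | linear_combination (-(if τ = -ν then (1:ℂ) else 0)) * hf1
          · subst hσμ
            have hf2 : q θ (μ + ν) (-μ) = q θ μ ν := q_eqw θ (by simp [wedge]; ring)
            have hne1 : ¬((-μ : ℤ × ℤ) = -ν) := fun h => hσν h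
            have hne2 : ¬(ν = μ) := fun h => hσν (by rw [h])
            simp only [neg_neg, if_pos rfl, if_neg hne1, if_neg hne2, if_true, if_false,
              eq_self_iff_true, one_smul, one_mul, mul_one, zero_smul, smul_zero, sub_zero,
              zero_sub, zero_mul, mul_zero]
            rw [hf2]
            match_scalars <;>
              first
                | ring1
          · have hne2 : ¬(μ = -σ) := fun h => hσμ (by rw [h]; simp)
            have hne3 : ¬(ν = -σ) := fun h => hσν (by rw [h]; simp)
            simp only [if_neg hσν, if_neg hσμ, if_neg hne2, if_neg hne3, zero_smul, smul_zero,
              mul_zero, zero_mul, sub_zero, zero_sub, neg_zero, add_zero, zero_add]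
            match_scalars <;> ring1
      | one =>
        refine ⟨one_mem _, 0, SetLike.one_mem_graded 𝒜, ?_, ?_, ?_⟩
        · have h1 : (⟨1, one_mem _⟩ : Algebra.adjoin ℂ (b '' V)) = 1 := Subtype.ext rfl
          rw [h1, hT1 σ hσ]
          simp only [ZeroMemClass.coe_zero]
          exact zero_mem _
        · rw [hL1]; exact zero_mem _
        · have h1 : (⟨1, one_mem _⟩ : Algebra.adjoin ℂ (b '' V)) = 1 := Subtype.ext rfl
          have hLr1 : Lr μ ν 1 = 0 := by
            apply Subtype.ext
            rw [hLr μ hμ ν hν]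
            simpa using hL1
          rw [h1, hT1 σ hσ, hT1 μ hμ, hT1 ν hν, hLr1, map_zero]
          simp
      | mul x y hxc hyc hxP hyP =>
        obtain ⟨hxB, m, hxm, hTx, hLx, hEx⟩ := hxP
        obtain ⟨hyB, m', hym, hTy, hLy, hEy⟩ := hyP
        have memg : ∀ {i j : ℤ × ℤ} {w : A}, i = j → w ∈ 𝒜 i → w ∈ 𝒜 j := by
          rintro i j w rfl hw; exact hw
        have hXY : (⟨x * y, mul_mem hxB hyB⟩ : Algebra.adjoin ℂ (b '' V))
            = ⟨x, hxB⟩ * ⟨y, hyB⟩ := Subtype.ext rfl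
        have e1 : Tsph σ (⟨x, hxB⟩ * ⟨y, hyB⟩)
            = Tsph σ ⟨x, hxB⟩ * ⟨y, hyB⟩ + Q7 θ (dbl σ) m • (⟨x, hxB⟩ * Tsph σ ⟨y, hyB⟩) :=
          hTLeib σ hσ m _ _ hxm
        have e2A : L μ ν (x * y) = L μ ν x * y + Q7 θ (dbl μ + dbl ν) m • (x * L μ ν y) :=
          hLeib μ hμ ν hν m x y hxm
        refine ⟨mul_mem hxB hyB, m + m', SetLike.mul_mem_graded hxm hym, ?_, ?_, ?_⟩
        · rw [hXY, e1]
          simp only [Subalgebra.coe_add, MulMemClass.coe_mul, SetLike.val_smul]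
          exact add_mem (memg (by ring) (SetLike.mul_mem_graded hTx hym))
            (Submodule.smul_mem _ _ (memg (by ring) (SetLike.mul_mem_graded hxm hTy)))
        · rw [e2A]
          exact add_mem (memg (by ring) (SetLike.mul_mem_graded hLx hym))
            (Submodule.smul_mem _ _ (memg (by ring) (SetLike.mul_mem_graded hxm hLy)))
        · -- the bracket identity on the product
          have hLxm : (↑(Lr μ ν ⟨x, hxB⟩) : A) ∈ 𝒜 (m + (dbl μ + dbl ν)) := by
            rw [hLr μ hμ ν hν]; exact hLx
          have e2 : Lr μ ν (⟨x, hxB⟩ * ⟨y, hyB⟩)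
              = Lr μ ν ⟨x, hxB⟩ * ⟨y, hyB⟩
                + Q7 θ (dbl μ + dbl ν) m • (⟨x, hxB⟩ * Lr μ ν ⟨y, hyB⟩) := by
            apply Subtype.ext
            simp only [Subalgebra.coe_add, MulMemClass.coe_mul, SetLike.val_smul, hLr μ hμ ν hν]
            exact e2A
          have e5 : Tsph σ (Lr μ ν ⟨x, hxB⟩ * ⟨y, hyB⟩)
              = Tsph σ (Lr μ ν ⟨x, hxB⟩) * ⟨y, hyB⟩
                + Q7 θ (dbl σ) (m + (dbl μ + dbl ν)) • (Lr μ ν ⟨x, hxB⟩ * Tsph σ ⟨y, hyB⟩) :=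
            hTLeib σ hσ _ _ _ hLxm
          have e6 : Tsph σ (⟨x, hxB⟩ * Lr μ ν ⟨y, hyB⟩)
              = Tsph σ ⟨x, hxB⟩ * Lr μ ν ⟨y, hyB⟩
                + Q7 θ (dbl σ) m • (⟨x, hxB⟩ * Tsph σ (Lr μ ν ⟨y, hyB⟩)) :=
            hTLeib σ hσ m _ _ hxm
          have a1 : L μ ν ((↑(Tsph σ ⟨x, hxB⟩) : A) * y)
              = L μ ν (↑(Tsph σ ⟨x, hxB⟩) : A) * y
                + Q7 θ (dbl μ + dbl ν) (m + dbl σ) • ((↑(Tsph σ ⟨x, hxB⟩) : A) * L μ ν y) :=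
            hLeib μ hμ ν hν _ _ y hTx
          have a2 : L μ ν (x * (↑(Tsph σ ⟨y, hyB⟩) : A))
              = L μ ν x * (↑(Tsph σ ⟨y, hyB⟩) : A)
                + Q7 θ (dbl μ + dbl ν) m • (x * L μ ν (↑(Tsph σ ⟨y, hyB⟩) : A)) :=
            hLeib μ hμ ν hν m x _ hxm
          have gμ : Tsph μ (⟨x, hxB⟩ * ⟨y, hyB⟩)
              = Tsph μ ⟨x, hxB⟩ * ⟨y, hyB⟩ + Q7 θ (dbl μ) m • (⟨x, hxB⟩ * Tsph μ ⟨y, hyB⟩) :=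
            hTLeib μ hμ m _ _ hxm
          have gν : Tsph ν (⟨x, hxB⟩ * ⟨y, hyB⟩)
              = Tsph ν ⟨x, hxB⟩ * ⟨y, hyB⟩ + Q7 θ (dbl ν) m • (⟨x, hxB⟩ * Tsph ν ⟨y, hyB⟩) :=
            hTLeib ν hν m _ _ hxm
          have s1 : Q7 θ (dbl μ + dbl ν) (m + dbl σ)
              = Q7 θ (dbl μ + dbl ν) m * q θ (μ + ν) σ := by
            rw [Q7_add_right, Q7_ddbl]
          have s2 : Q7 θ (dbl σ) (m + (dbl μ + dbl ν))
              = Q7 θ (dbl σ) m * q θ σ (μ + ν) := by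
            rw [Q7_add_right, Q7_ddbl']
          have hcc : q θ (μ + ν) σ * q θ σ (μ + ν) = 1 := q_mul_one θ (by simp [wedge]; ring)
          have sμ : (if σ = -ν then (1:ℂ) else 0) * Q7 θ (dbl μ) m
              = (if σ = -ν then (1:ℂ) else 0) * (Q7 θ (dbl μ + dbl ν) m * Q7 θ (dbl σ) m) := by
            by_cases h : σ = -ν
            · subst h
              rw [if_pos rfl, one_mul, one_mul, ← Q7_add_left]
              exact Q7_congr θ m (by rw [dbl_neg]; ring)
            · rw [if_neg h, zero_mul, zero_mul]
          have sν : (if σ = -μ then (1:ℂ) else 0) * Q7 θ (dbl ν) m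
              = (if σ = -μ then (1:ℂ) else 0) * (Q7 θ (dbl μ + dbl ν) m * Q7 θ (dbl σ) m) := by
            by_cases h : σ = -μ
            · subst h
              rw [if_pos rfl, one_mul, one_mul, ← Q7_add_left]
              exact Q7_congr θ m (by rw [dbl_neg]; ring)
            · rw [if_neg h, zero_mul, zero_mul]
          have hEx' := sub_eq_iff_eq_add.mp hEx
          have hEy' := sub_eq_iff_eq_add.mp hEy
          rw [hXY, e1, e2, map_add, map_smul, e5, e6, gμ, gν]
          simp only [Subalgebra.coe_add, MulMemClass.coe_mul, SetLike.val_smul, hLr μ hμ ν hν]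
          rw [map_add, map_smul, a1, a2, hEx', hEy', s1, s2]
          simp only [add_mul, sub_mul, smul_mul_assoc, mul_add, mul_sub, mul_smul_comm,
            smul_add, smul_sub, smul_smul]
          match_scalars <;>
            first
              | ring1
              | linear_combination sμ
              | linear_combination -sμ
              | linear_combination sν
              | linear_combination -sν
              | linear_combination (q θ μ ν) * sν
              | linear_combination (-(q θ μ ν)) * sν
              | linear_combination (Q7 θ (dbl σ) m) * hcc
              | linear_combination (-(Q7 θ (dbl σ) m)) * hcc
    -- stage 2 : extend by linearity to the whole subalgebra
    have hz := z.2
    rw [← Subalgebra.mem_toSubmodule, Algebra.adjoin_eq_span] at hz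
    have H2 : ∃ hB : (z : A) ∈ Algebra.adjoin ℂ (b '' V),
        (L μ ν (↑(Tsph σ ⟨(z : A), hB⟩) : A)
            - q θ (μ + ν) σ • (↑(Tsph σ (Lr μ ν ⟨(z : A), hB⟩)) : A)
          = (if σ = -ν then (1:ℂ) else 0) • (↑(Tsph μ ⟨(z : A), hB⟩) : A)
            - q θ μ ν • ((if σ = -μ then (1:ℂ) else 0) • (↑(Tsph ν ⟨(z : A), hB⟩) : A))) := by
      have main2 : ∀ a ∈ Submodule.span ℂ (Submonoid.closure (b '' (V : Set (ℤ × ℤ))) : Set A),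
          ∃ hB : a ∈ Algebra.adjoin ℂ (b '' V),
            (L μ ν (↑(Tsph σ ⟨a, hB⟩) : A)
                - q θ (μ + ν) σ • (↑(Tsph σ (Lr μ ν ⟨a, hB⟩)) : A)
              = (if σ = -ν then (1:ℂ) else 0) • (↑(Tsph μ ⟨a, hB⟩) : A)
                - q θ μ ν • ((if σ = -μ then (1:ℂ) else 0) • (↑(Tsph ν ⟨a, hB⟩) : A))) := by
        intro a ha
        induction ha using Submodule.span_induction with
        | mem a ha =>
          obtain ⟨hB, m, _, _, _, hE⟩ := stage1 a ha
          exact ⟨hB, hE⟩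
        | zero =>
          refine ⟨zero_mem _, ?_⟩
          have h0 : (⟨0, zero_mem _⟩ : Algebra.adjoin ℂ (b '' V)) = 0 := Subtype.ext rfl
          rw [h0]
          simp
        | add x y hxs hys hxP hyP =>
          obtain ⟨hxB, hEx⟩ := hxP
          obtain ⟨hyB, hEy⟩ := hyP
          refine ⟨add_mem hxB hyB, ?_⟩
          have hXY : (⟨x + y, add_mem hxB hyB⟩ : Algebra.adjoin ℂ (b '' V))
              = ⟨x, hxB⟩ + ⟨y, hyB⟩ := Subtype.ext rfl
          rw [hXY]
          simp only [map_add, Subalgebra.coe_add]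
          linear_combination (norm := module) hEx + hEy
        | smul c x hxs hxP =>
          obtain ⟨hxB, hEx⟩ := hxP
          have hcB : c • x ∈ Algebra.adjoin ℂ (b '' V) := by
            have := Submodule.smul_mem (Subalgebra.toSubmodule (Algebra.adjoin ℂ (b '' V))) c
              (by rwa [Subalgebra.mem_toSubmodule] : x ∈ _)
            rwa [Subalgebra.mem_toSubmodule] at this
          refine ⟨hcB, ?_⟩
          have hXY : (⟨c • x, hcB⟩ : Algebra.adjoin ℂ (b '' V)) = c • ⟨x, hxB⟩ :=
            Subtype.ext rfl
          rw [hXY]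
          simp only [map_smul, SetLike.val_smul]
          linear_combination (norm := module) c • hEx
      exact main2 _ hz
    obtain ⟨hB, hE⟩ := H2
    have hzz : (⟨(z : A), hB⟩ : Algebra.adjoin ℂ (b '' V)) = z := Subtype.ext rfl
    rwa [hzz] at hE
  rw [key]
  have hρsub : ∀ X Y, ρ (X - Y) = ρ X - ρ Y := by
    intro X Y
    have hneg : ∀ Z, ρ (-Z) = -ρ Z := fun Z => by
      rw [← neg_one_smul ℂ Z, hρsmul]; exact neg_one_smul ℂ (ρ Z)
    rw [sub_eq_add_neg, hρadd, hneg, ← sub_eq_add_neg]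
  rw [hρsub, hρsmul, hρsmul, hρsmul, hρT μ hμ, hρT ν hν, hρT σ hσ]
  -- switch to End-ring notation
  simp only [← Module.End.mul_eq_comp]
  have expand :
      L μ ν * (∑ τ ∈ V, LinearMap.mulLeft ℂ (b (-τ)) * L τ σ)
        - q θ (μ + ν) σ • ((∑ τ ∈ V, LinearMap.mulLeft ℂ (b (-τ)) * L τ σ) * L μ ν)
        - ((if σ = -ν then (1:ℂ) else 0) • ∑ τ ∈ V, LinearMap.mulLeft ℂ (b (-τ)) * L τ μ
           - q θ μ ν • ((if σ = -μ then (1:ℂ) else 0) • ∑ τ ∈ V, LinearMap.mulLeft ℂ (b (-τ)) * L τ ν))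
      = ∑ τ ∈ V,
          (L μ ν * (LinearMap.mulLeft ℂ (b (-τ)) * L τ σ)
            - q θ (μ + ν) σ • ((LinearMap.mulLeft ℂ (b (-τ)) * L τ σ) * L μ ν)
            - ((if σ = -ν then (1:ℂ) else 0) • (LinearMap.mulLeft ℂ (b (-τ)) * L τ μ)
               - q θ μ ν • ((if σ = -μ then (1:ℂ) else 0) • (LinearMap.mulLeft ℂ (b (-τ)) * L τ ν)))) := by
    simp only [Finset.mul_sum, Finset.sum_mul, Finset.smul_sum, ← Finset.sum_sub_distrib]
  rw [expand]
  have main : ∀ τ ∈ V,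
      (L μ ν * (LinearMap.mulLeft ℂ (b (-τ)) * L τ σ)
        - q θ (μ + ν) σ • ((LinearMap.mulLeft ℂ (b (-τ)) * L τ σ) * L μ ν)
        - ((if σ = -ν then (1:ℂ) else 0) • (LinearMap.mulLeft ℂ (b (-τ)) * L τ μ)
           - q θ μ ν • ((if σ = -μ then (1:ℂ) else 0) • (LinearMap.mulLeft ℂ (b (-τ)) * L τ ν))))
      = ((if τ = ν then (1:ℂ) else 0) • (LinearMap.mulLeft ℂ (b μ) * L τ σ)
          - q θ μ ν • ((if τ = μ then (1:ℂ) else 0) • (LinearMap.mulLeft ℂ (b ν) * L τ σ)))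
        + ((if τ = -ν then (1:ℂ) else 0) • (q θ (μ + ν) (-τ) • (LinearMap.mulLeft ℂ (b (-τ)) * L μ σ))
          - q θ μ ν • ((if τ = -μ then (1:ℂ) else 0) • (q θ (μ + ν) (-τ) • (LinearMap.mulLeft ℂ (b (-τ)) * L ν σ)))) := by
    intro τ hτ
    have hτ' : -τ ∈ V := neg_mem_V hτ
    have mulLeft_sub : ∀ u v : A, LinearMap.mulLeft ℂ (u - v)
        = LinearMap.mulLeft ℂ u - LinearMap.mulLeft ℂ v := by
      intro u v; ext a; simp [sub_mul]
    have mulLeft_smul : ∀ (c : ℂ) (u : A), LinearMap.mulLeft ℂ (c • u)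
        = c • LinearMap.mulLeft ℂ u := by
      intro c u; ext a; simp [smul_mul_assoc]
    have hstep : L μ ν * (LinearMap.mulLeft ℂ (b (-τ)) * L τ σ)
        = LinearMap.mulLeft ℂ (L μ ν (b (-τ))) * L τ σ
          + q θ (μ + ν) (-τ) • (LinearMap.mulLeft ℂ (b (-τ)) * (L μ ν * L τ σ)) := by
      apply LinearMap.ext; intro a
      have h := hLeib μ hμ ν hν (dbl (-τ)) (b (-τ)) ((L τ σ) a) (hb _ hτ')
      rw [Q7_ddbl] at h
      simpa [Module.End.mul_apply, LinearMap.mulLeft_apply, LinearMap.smul_apply,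
        LinearMap.add_apply] using h
    have hrel := hLrel μ hμ ν hν τ hτ σ hσ
    simp only [← Module.End.mul_eq_comp] at hrel
    have hcomm2 := eq_add_of_sub_eq hrel
    rw [hanti μ hμ τ hτ, hanti ν hν τ hτ] at hcomm2
    have hq3 : ∀ Z : Module.End ℂ A,
        q θ (μ + ν) (-τ) • (q θ (μ + ν) (τ + σ) • Z) = q θ (μ + ν) σ • Z := by
      intro Z
      rw [smul_smul, q_mul θ (p:=μ+ν) (r:=-τ) (p':=μ+ν) (r':=τ+σ) (s:=μ+ν) (t:=σ) (by simp [wedge]; ring)]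
    rw [hstep, hcomm2, hLval μ hμ ν hν (-τ) hτ']
    simp only [neg_inj]
    rw [mulLeft_sub, mulLeft_smul, mulLeft_smul, mulLeft_smul]
    simp only [mul_add, mul_sub, mul_smul_comm, smul_add, smul_sub, sub_mul, smul_mul_assoc,
      mul_assoc, hq3, smul_smul, smul_neg, mul_neg, neg_smul, neg_neg]
    have hmn : ∀ X Y : Module.End ℂ A, X * -Y = -(X * Y) := fun X Y => mul_neg X Y
    by_cases hσν : σ = -ν <;> by_cases hσμ : σ = -μ
    · have hnm : ν = μ := neg_inj.mp (hσν.symm.trans hσμ)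
      subst hnm
      subst hσν
      have ha1 : q θ (ν + ν) (-τ) * (q θ τ (-ν) * q θ ν τ) = 1 :=
        q_q_q_one θ (by simp [wedge]; ring)
      simp only [if_pos rfl, if_true, eq_self_iff_true, one_smul, one_mul, mul_one, zero_smul,
        smul_zero, sub_zero, zero_sub, neg_neg, mul_neg, hmn, mul_smul_comm, neg_zero]
      match_scalars <;>
        first
          | ring1
          | linear_combination ha1
          | linear_combination -ha1
          | linear_combination (q θ ν ν) * ha1
          | linear_combination (-(q θ ν ν)) * ha1
          | linear_combination (1 + q θ ν ν) * ha1
          | linear_combination (-1 - q θ ν ν) * ha1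
          | linear_combination (1 - q θ ν ν) * ha1
          | linear_combination (q θ ν ν - 1) * ha1
    · subst hσν
      have ha1 : q θ (μ + ν) (-τ) * (q θ τ (-ν) * q θ μ τ) = 1 :=
        q_q_q_one θ (by simp [wedge]; ring)
      have hne : ¬((-ν : ℤ × ℤ) = -μ) := hσμ
      simp only [if_pos rfl, if_neg hne, if_true, if_false, eq_self_iff_true, one_smul, one_mul,
        mul_one, zero_smul, smul_zero, mul_zero, zero_mul, sub_zero, zero_sub, neg_neg, mul_neg, hmn,
        mul_smul_comm, neg_zero]
      match_scalars <;>
        first | ring1 | linear_combination ha1 | linear_combination -ha1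
    · subst hσμ
      have ha2 : q θ (μ + ν) (-τ) * (q θ τ (-μ) * q θ ν τ) = 1 :=
        q_q_q_one θ (by simp [wedge]; ring)
      have hne : ¬((-μ : ℤ × ℤ) = -ν) := fun h => hσν h
      simp only [if_pos rfl, if_neg hne, if_true, if_false, eq_self_iff_true, one_smul, one_mul,
        mul_one, zero_smul, smul_zero, mul_zero, zero_mul, sub_zero, zero_sub, neg_neg, mul_neg, hmn,
        mul_smul_comm, neg_zero]
      match_scalars <;>
        first
          | ring1
          | linear_combination (q θ μ ν) * ha2
          | linear_combination (-(q θ μ ν)) * ha2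
    · simp only [if_neg hσν, if_neg hσμ, zero_smul, smul_zero, mul_zero, zero_mul, sub_zero,
        zero_sub, neg_zero, add_zero, zero_add]
      match_scalars <;> ring1
  rw [Finset.sum_congr rfl main]
  rw [Finset.sum_add_distrib, Finset.sum_sub_distrib, Finset.sum_sub_distrib, ← Finset.smul_sum, ← Finset.smul_sum]
  simp only [ite_smul, one_smul, zero_smul]
  rw [Finset.sum_ite_eq' V ν, Finset.sum_ite_eq' V μ, Finset.sum_ite_eq' V (-ν), Finset.sum_ite_eq' V (-μ),
    if_pos hν, if_pos hμ, if_pos (neg_mem_V hν), if_pos (neg_mem_V hμ)]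
  have hq1 : q θ (μ + ν) ν = q θ μ ν := by
    apply q_eqw; simp [wedge]; ring
  have hq2 : q θ μ ν * q θ (μ + ν) μ = 1 := by
    apply q_mul_one; simp [wedge]; ring
  rw [neg_neg, neg_neg, hq1, smul_smul, hq2, one_smul]
  abel

end Statement8
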